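/- arXiv:2401.01471 — 2 statements merged into one kernel-verified Lean document; each statement's English description precedes it below -/
import Mathlib

section
/- Let p(t) = Σ_{k=0}^m a_k t^k ∈ ℝ[t] and let x ∈ ℝⁿ with x > 0 entrywise. Then p(K_x) = Σ_{r=0}^{n−1} [ p_{(r,n)}(α_x^{1/n}) / α_x^{r/n} ] · K_x^r, where p_{(r,n)} is the r mod n-part of p and α_x^{1/n} denotes the positive real n-th root of α_x. -/
open Matrix

/-- The `n`-by-`n` cyclic permutation matrix `C` with `(i,j)`-entry `δ_{π(i),j}`,
where `π(i) = (i mod n) + 1` (realized 0-based by `finRotate n : i ↦ i + 1`). -/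
noncomputable def cycMat (n : ℕ) : Matrix (Fin n) (Fin n) ℝ :=
  (finRotate n).permMatrix ℝ

/-- `K_x := D_x C`. -/
noncomputable def Kmat {n : ℕ} (x : Fin n → ℝ) : Matrix (Fin n) (Fin n) ℝ :=
  Matrix.diagonal x * cycMat n

/-- The `r mod n`-part of `p`: `p_{(r,n)}(t) := Σ_{k ≤ deg p, k mod n = r} a_k t^k`. -/
noncomputable def polyPart (p : Polynomial ℝ) (n r : ℕ) : Polynomial ℝ :=
  ∑ k ∈ Finset.range (p.natDegree + 1),
    if k % n = r then Polynomial.C (p.coeff k) * Polynomial.X ^ k else 0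

lemma permMatrix_mul_diagonal {n : ℕ} (σ : Equiv.Perm (Fin n)) (y : Fin n → ℝ) :
    σ.permMatrix ℝ * Matrix.diagonal y = Matrix.diagonal (y ∘ σ) * σ.permMatrix ℝ := by
  rw [Equiv.Perm.permMatrix, PEquiv.toMatrix_toPEquiv_mul, PEquiv.mul_toMatrix_toPEquiv]
  ext i j
  simp only [Matrix.submatrix_apply, id_eq, Matrix.diagonal_apply, Function.comp_apply]
  by_cases h : σ i = j
  · subst h; simp
  · rw [if_neg h, if_neg]
    intro hij
    exact h (by rw [hij]; simp)

lemma permMatrix_mul {n : ℕ} (σ τ : Equiv.Perm (Fin n)) :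
    σ.permMatrix ℝ * τ.permMatrix ℝ = (τ * σ).permMatrix ℝ := by
  rw [Equiv.Perm.permMatrix, Equiv.Perm.permMatrix, Equiv.Perm.permMatrix,
    ← PEquiv.toMatrix_trans, ← Equiv.toPEquiv_trans]
  rfl

lemma Kmat_pow {n : ℕ} (x : Fin n → ℝ) (k : ℕ) :
    Kmat x ^ k = Matrix.diagonal (fun i => ∏ t ∈ Finset.range k, x ((finRotate n ^ t) i)) *
      ((finRotate n ^ k).permMatrix ℝ) := by
  induction k with
  | zero =>
    ext i j
    simp [Equiv.Perm.permMatrix, Equiv.toPEquiv, PEquiv.toMatrix, Matrix.mul_apply,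
      Matrix.diagonal_apply, Matrix.one_apply]
  | succ k ih =>
    rw [pow_succ, ih, Kmat, cycMat, Matrix.mul_assoc,
      ← Matrix.mul_assoc (Equiv.Perm.permMatrix ℝ (finRotate n ^ k)),
      permMatrix_mul_diagonal, Matrix.mul_assoc, permMatrix_mul,
      ← Matrix.mul_assoc, Matrix.diagonal_mul_diagonal, ← pow_succ']
    congr 1
    ext i
    simp [Finset.prod_range_succ]

open Fin.NatCast in
lemma finRotate_pow_apply {m : ℕ} (t : ℕ) (i : Fin (m + 1)) :
    (finRotate (m + 1) ^ t) i = i + (t : Fin (m + 1)) := by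
  induction t with
  | zero => simp
  | succ t ih =>
    rw [pow_succ', Equiv.Perm.mul_apply, ih, finRotate_succ_apply, Nat.cast_add, Nat.cast_one,
      add_assoc]

lemma Kmat_pow_n {n : ℕ} (hn : 0 < n) (x : Fin n → ℝ) :
    Kmat x ^ n = (∏ k, x k) • (1 : Matrix (Fin n) (Fin n) ℝ) := by
  obtain ⟨m, rfl⟩ : ∃ m, n = m + 1 := ⟨n - 1, (Nat.succ_pred_eq_of_pos hn).symm⟩
  rw [Kmat_pow]
  have h1 : finRotate (m + 1) ^ (m + 1) = 1 := by
    ext i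
    rw [finRotate_pow_apply]
    simp
  rw [h1]
  have h2 : ∀ i : Fin (m + 1),
      ∏ t ∈ Finset.range (m + 1), x ((finRotate (m + 1) ^ t) i) = ∏ k, x k := by
    intro i
    rw [← Fin.prod_univ_eq_prod_range (fun t => x ((finRotate (m + 1) ^ t) i))]
    have : ∀ t : Fin (m + 1), (finRotate (m + 1) ^ (t : ℕ)) i = (Equiv.addLeft i) t := by
      intro t
      rw [finRotate_pow_apply, Fin.cast_val_eq_self]
      rfl
    rw [Finset.prod_congr rfl fun t _ => congrArg x (this t)]
    exact Equiv.prod_comp (Equiv.addLeft i) x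
  have h3 : (fun i => ∏ t ∈ Finset.range (m + 1), x ((finRotate (m + 1) ^ t) i)) =
      fun _ => ∏ k, x k := funext h2
  rw [h3]
  ext i j
  simp [Equiv.Perm.permMatrix, Equiv.toPEquiv, PEquiv.toMatrix, Matrix.diagonal_apply,
    Matrix.one_apply, Matrix.mul_apply]

/-- If `p ∈ ℝ[t]` and `x ∈ ℝⁿ` with `x > 0` entrywise, then
`p(K_x) = Σ_{r=0}^{n-1} [ p_{(r,n)}(α_x^{1/n}) / α_x^{r/n} ] • K_x^r`,
where `α_x = Π_k x_k` and `α_x^{1/n}` is the positive real `n`-th root. -/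
theorem aeval_Kmat (n : ℕ) (p : Polynomial ℝ) (x : Fin n → ℝ) (hx : ∀ i, 0 < x i) :
    Polynomial.aeval (Kmat x) p =
      ∑ r ∈ Finset.range n,
        ((polyPart p n r).eval ((∏ k, x k) ^ ((1 : ℝ) / (n : ℝ))) /
            (∏ k, x k) ^ ((r : ℝ) / (n : ℝ))) • Kmat x ^ r := by
  rcases Nat.eq_zero_or_pos n with rfl | hn
  · apply Subsingleton.elim
  set α := ∏ k, x k with hα_def
  have hα : 0 < α := Finset.prod_pos fun i _ => hx i
  have hn0 : (n : ℝ) ≠ 0 := Nat.cast_ne_zero.mpr hn.ne'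
  set β := α ^ ((1 : ℝ) / (n : ℝ)) with hβ_def
  have hβk : ∀ k : ℕ, β ^ k = α ^ ((k : ℝ) / (n : ℝ)) := by
    intro k
    rw [hβ_def, ← Real.rpow_natCast (α ^ ((1 : ℝ) / (n : ℝ))) k, ← Real.rpow_mul hα.le]
    ring_nf
  have hscalar : ∀ k : ℕ, β ^ k / α ^ ((↑(k % n) : ℝ) / (n : ℝ)) = α ^ (k / n) := by
    intro k
    rw [hβk, ← Real.rpow_sub hα, div_sub_div_same, ← Real.rpow_natCast α (k / n)]
    congr 1
    have hk : (k : ℝ) = (n : ℝ) * ((k / n : ℕ) : ℝ) + ((k % n : ℕ) : ℝ) := by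
      exact_mod_cast (Nat.div_add_mod k n).symm
    field_simp
    linarith [hk]
  have hKk : ∀ k : ℕ, Kmat x ^ k = (α ^ (k / n)) • Kmat x ^ (k % n) := by
    intro k
    conv_lhs => rw [← Nat.div_add_mod k n]
    rw [pow_add, pow_mul, Kmat_pow_n hn, smul_pow, one_pow, smul_mul_assoc, one_mul]
  rw [Polynomial.aeval_eq_sum_range]
  symm
  calc ∑ r ∈ Finset.range n,
      ((polyPart p n r).eval β / α ^ ((r : ℝ) / (n : ℝ))) • Kmat x ^ r
      = ∑ r ∈ Finset.range n, ∑ k ∈ Finset.range (p.natDegree + 1),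
          (if k % n = r then (p.coeff k * β ^ k / α ^ ((r : ℝ) / (n : ℝ))) • Kmat x ^ r
           else 0) := by
        refine Finset.sum_congr rfl fun r _ => ?_
        rw [polyPart, Polynomial.eval_finset_sum, Finset.sum_div, Finset.sum_smul]
        refine Finset.sum_congr rfl fun k _ => ?_
        split <;> simp
    _ = ∑ k ∈ Finset.range (p.natDegree + 1), ∑ r ∈ Finset.range n,
          (if k % n = r then (p.coeff k * β ^ k / α ^ ((r : ℝ) / (n : ℝ))) • Kmat x ^ r
           else 0) := Finset.sum_comm
    _ = ∑ k ∈ Finset.range (p.natDegree + 1),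
          (p.coeff k * β ^ k / α ^ ((↑(k % n) : ℝ) / (n : ℝ))) • Kmat x ^ (k % n) := by
        refine Finset.sum_congr rfl fun k _ => ?_
        rw [Finset.sum_ite_eq]
        rw [if_pos (Finset.mem_range.mpr (Nat.mod_lt _ hn))]
    _ = ∑ k ∈ Finset.range (p.natDegree + 1), p.coeff k • Kmat x ^ k := by
        refine Finset.sum_congr rfl fun k _ => ?_
        rw [hKk k, smul_smul, mul_div_assoc, hscalar k]
end

section
/- Let p ∈ ℝ[t] and let x ∈ ℝⁿ with x > 0 entrywise. If for every r ∈ {0,…,n−1} the r mod n-part p_{(r,n)} of p belongs to 𝒫₁ (i.e., p_{(r,n)}(a) ≥ 0 for every real a ≥ 0), then the matrix p(K_x) is entrywise nonnegative. -/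
open Matrix

section Helpers

open Fin.NatCast Fin.CommRing

variable {m : ℕ} (x : Fin (m+1) → ℝ)

lemma Kmat_apply (i j : Fin (m+1)) : Kmat x i j = if i + 1 = j then x i else 0 := by
  simp [Kmat, cycMat, Matrix.diagonal_mul, Equiv.Perm.permMatrix, PEquiv.toMatrix_apply,
    Equiv.toPEquiv_apply, finRotate_succ_apply, mul_ite, eq_comm]

lemma Kmat_pow_apply (k : ℕ) (i j : Fin (m+1)) :
    (Kmat x ^ k) i j = if i + (k : Fin (m+1)) = j then
      ∏ t ∈ Finset.range k, x (i + (t : Fin (m+1))) else 0 := by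
  induction k generalizing j with
  | zero => simp [Matrix.one_apply]
  | succ k ih =>
    rw [pow_succ, Matrix.mul_apply]
    rw [Finset.sum_eq_single (i + (k : Fin (m+1)))]
    · rw [ih, if_pos rfl, Kmat_apply, Finset.prod_range_succ]
      have : ((k+1 : ℕ) : Fin (m+1)) = (k : Fin (m+1)) + 1 := by push_cast; ring
      rw [this, ← add_assoc]
      split <;> simp [mul_comm]
    · intro b _ hb
      rw [ih, if_neg (fun h => hb h.symm), zero_mul]
    · simp

lemma prod_shift (b : Fin (m+1)) :
    ∏ t ∈ Finset.range (m+1), x (b + (t : Fin (m+1))) = ∏ j, x j := by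
  rw [← Fin.prod_univ_eq_prod_range (fun t => x (b + (t : Fin (m+1))))]
  have : ∀ t : Fin (m+1), ((t : ℕ) : Fin (m+1)) = t := fun t => Fin.cast_val_eq_self t
  simp_rw [this]
  exact Fintype.prod_equiv (Equiv.addLeft b) _ _ (fun t => rfl)

lemma prod_block (i : Fin (m+1)) (q r : ℕ) :
    ∏ t ∈ Finset.range (q*(m+1)+r), x (i + (t : Fin (m+1)))
      = (∏ j, x j)^q * ∏ t ∈ Finset.range r, x (i + (t : Fin (m+1))) := by
  induction q with
  | zero => simp
  | succ q ih =>
    have : (q+1)*(m+1)+r = (q*(m+1)+r) + (m+1) := by ring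
    rw [this, Finset.prod_range_add, ih]
    have : ∀ t ∈ Finset.range (m+1),
        x (i + ((q*(m+1)+r+t : ℕ) : Fin (m+1))) = x ((i + ((q*(m+1)+r : ℕ) : Fin (m+1))) + (t : Fin (m+1))) := by
      intro t _; congr 1; push_cast; ring
    rw [Finset.prod_congr rfl this, prod_shift]
    ring

theorem aeval_Kmat_nonneg' (p : Polynomial ℝ) (hx : ∀ i, 0 < x i)
    (h : ∀ r < m+1, ∀ a : ℝ, 0 ≤ a → 0 ≤ (polyPart p (m+1) r).eval a) :
    ∀ i j, 0 ≤ Polynomial.aeval (Kmat x) p i j := by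
  intro i j
  set P : ℝ := ∏ j, x j with hPdef
  have hP : 0 < P := Finset.prod_pos (fun t _ => hx t)
  set a : ℝ := P ^ ((m+1 : ℝ)⁻¹) with hadef
  have ha : 0 < a := Real.rpow_pos_of_pos hP _
  have haP : a ^ (m+1) = P := by
    rw [hadef, ← Real.rpow_natCast (P ^ ((m+1:ℝ)⁻¹)) (m+1), ← Real.rpow_mul hP.le,
      show ((m+1:ℕ):ℝ) = (m:ℝ)+1 by push_cast; ring,
      inv_mul_cancel₀ (by positivity), Real.rpow_one]
  obtain ⟨r, hrdef⟩ : ∃ r, r = ((j - i : Fin (m+1))).val := ⟨_, rfl⟩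
  have hr : r < m+1 := hrdef ▸ (j - i).isLt
  set c : ℝ := (∏ t ∈ Finset.range r, x (i + (t : Fin (m+1)))) / a ^ r with hcdef
  have hc : 0 < c := div_pos (Finset.prod_pos (fun t _ => hx _)) (by positivity)
  rw [Polynomial.aeval_eq_sum_range, Matrix.sum_apply]
  have key : ∀ k ∈ Finset.range (p.natDegree + 1),
      (p.coeff k • Kmat x ^ k) i j
        = c * (if k % (m+1) = r then p.coeff k * a ^ k else 0) := by
    intro k _
    rw [Matrix.smul_apply, Kmat_pow_apply, smul_eq_mul]
    have hcond : (i + (k : Fin (m+1)) = j) ↔ k % (m+1) = r := by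
      rw [hrdef]
      constructor
      · rintro rfl
        rw [add_sub_cancel_left, Fin.val_natCast]
      · intro hval
        have : (k : Fin (m+1)) = j - i := by
          rw [Fin.ext_iff, Fin.val_natCast, hval]
        rw [this, add_sub_cancel]
    split_ifs with h1 h2 h2
    · obtain ⟨q, hq⟩ : ∃ q, q = k/(m+1) := ⟨_, rfl⟩
      have hk : k = q*(m+1) + r := by
        rw [hq, ← h2, mul_comm]; exact (Nat.div_add_mod k (m+1)).symm
      have hak : a ^ (q*(m+1) + r) = P ^ q * a ^ r := by
        rw [pow_add, pow_mul', haP]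
      rw [hk, prod_block, hak, hcdef]
      field_simp
      ring
    · exact absurd (hcond.mp h1) h2
    · exact absurd (hcond.mpr h2) h1
    · ring
  rw [Finset.sum_congr rfl key, ← Finset.mul_sum]
  have heval : (polyPart p (m+1) r).eval a
      = ∑ k ∈ Finset.range (p.natDegree + 1),
          (if k % (m+1) = r then p.coeff k * a ^ k else 0) := by
    rw [polyPart, Polynomial.eval_finset_sum]
    refine Finset.sum_congr rfl (fun k _ => ?_)
    rw [apply_ite (Polynomial.eval a)]
    simp
  rw [← heval]
  exact mul_nonneg hc.le (h r hr a ha.le)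

end Helpers

/-- Let `p ∈ ℝ[t]` and `x ∈ ℝⁿ` with `x > 0` entrywise. If for every
`r ∈ {0,…,n-1}` the `r mod n`-part `p_{(r,n)}` of `p` belongs to `𝒫₁` (i.e.,
`p_{(r,n)}(a) ≥ 0` for all real `a ≥ 0`), then `p(K_x)` is entrywise nonnegative. -/
theorem aeval_Kmat_nonneg (n : ℕ) (p : Polynomial ℝ) (x : Fin n → ℝ) (hx : ∀ i, 0 < x i)
    (h : ∀ r < n, ∀ a : ℝ, 0 ≤ a → 0 ≤ (polyPart p n r).eval a) :
    ∀ i j, 0 ≤ Polynomial.aeval (Kmat x) p i j := by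
  cases n with
  | zero => intro i; exact i.elim0
  | succ m => exact aeval_Kmat_nonneg' x p hx h
end
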